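/- arXiv:2407.16491 — 2 statements merged into one kernel-verified Lean document; each statement's English description precedes it below -/
import Mathlib

section
/- Soundness of the DAG Canadian Traveller dynamic program (one direction of Lemma 2): in the Canadian Traveller game on a weighted DAG G with source s, sink t, and Blocker budget k, if π_k(s) ≤ T then Traveller has a strategy guaranteeing arrival at t with total cost at most T. -/
/-- The `(j+1)`-th smallest element of a multiset of extended naturals, taken as
`⊤` when the multiset has at most `j` elements. -/
def kthSmallest (s : Multiset ℕ∞) (j : ℕ) : ℕ∞ :=
  (s.sort (· ≤ ·)).getD j ⊤

/-- The multiset of values `f(head e) + len e` over the arcs `e` leaving `v`. -/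
def outVals {V ι : Type*} [DecidableEq V] (E : Finset ι) (tail head : ι → V)
    (len : ι → ℕ) (f : V → ℕ∞) (v : V) : Multiset ℕ∞ :=
  (E.filter fun e => tail e = v).val.map fun e => f (head e) + (len e : ℕ∞)

/-- `π` satisfies the Canadian Traveller dynamic-programming recursion. -/
def SatisfiesRec {V ι : Type*} [DecidableEq V] (E : Finset ι)
    (tail head : ι → V) (len : ι → ℕ) (t : V) (π : ℕ → V → ℕ∞) : Prop :=
  (∀ i, π i t = 0) ∧
  ∀ i v, v ≠ t →
    π i v = (Finset.range (i + 1)).sup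
      fun m => kthSmallest (outVals E tail head len (π (i - m)) v) m

/-- The digraph is acyclic. -/
def ArcAcyclic {V ι : Type*} (E : Finset ι) (tail head : ι → V) : Prop :=
  ∀ v : V, ¬ Relation.TransGen (fun a b => ∃ e ∈ E, tail e = a ∧ head e = b) v v

/-- Winning positions for Traveller in the Canadian Traveller game on a weighted
digraph: a position records the current vertex, the cost spent so far, the set of
already visited vertices and the set of blocked arcs.  Traveller wins at `t` within
budget `T`; otherwise, upon arrival at `v`, Blocker may permanently block additional
outgoing arcs of `v` (only on a first visit, at most `k` blocked in total), after
which Traveller traverses some unblocked outgoing arc. -/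
inductive DWin {V ι : Type*} [DecidableEq V] [DecidableEq ι]
    (E : Finset ι) (tail head : ι → V) (len : ι → ℕ) (t : V) (k T : ℕ) :
    V → ℕ → Finset V → Finset ι → Prop
  | reach : ∀ (cost : ℕ) (vis : Finset V) (B : Finset ι), cost ≤ T →
      DWin E tail head len t k T t cost vis B
  | move : ∀ (v : V) (cost : ℕ) (vis : Finset V) (B : Finset ι)
      (pick : Finset ι → ι),
      (∀ B' : Finset ι, B ⊆ B' → B'.card ≤ k →
        (∀ f ∈ B' \ B, f ∈ E ∧ tail f = v ∧ v ∉ vis) →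
        pick B' ∈ E ∧ tail (pick B') = v ∧ pick B' ∉ B') →
      (∀ B' : Finset ι, B ⊆ B' → B'.card ≤ k →
        (∀ f ∈ B' \ B, f ∈ E ∧ tail f = v ∧ v ∉ vis) →
        DWin E tail head len t k T (head (pick B')) (cost + len (pick B'))
          (insert v vis) B') →
      DWin E tail head len t k T v cost vis B

lemma kth_count (s : Multiset ℕ∞) (m : ℕ) (h : kthSmallest s m ≠ ⊤) :
    m + 1 ≤ s.countP (fun x => x ≤ kthSmallest s m) := by
  classical
  obtain ⟨c, hc⟩ : ∃ c, kthSmallest s m = c := ⟨_, rfl⟩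
  rw [hc] at h ⊢
  set L := s.sort (· ≤ ·) with hL
  have hlen : m < L.length := by
    by_contra hle
    exact h (hc ▸ List.getD_eq_default _ _ (le_of_not_gt hle))
  have hsorted : L.Pairwise (· ≤ ·) := s.pairwise_sort _
  have hk : c = L.get ⟨m, hlen⟩ := by
    rw [← hc]
    simp [kthSmallest, ← hL, List.getD_eq_getElem?_getD, List.getElem?_eq_getElem hlen]
  have hs : s = (L : Multiset ℕ∞) := (s.sort_eq _).symm
  have htake : ∀ x ∈ L.take (m+1), x ≤ c := by
    intro x hx
    obtain ⟨j, hj, rfl⟩ := List.mem_take_iff_getElem.mp hx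
    have hjm : j ≤ m := by omega
    have hjlen : j < L.length := by omega
    rw [hk]
    exact hsorted.rel_get_of_le (a := ⟨j, hjlen⟩) (b := ⟨m, hlen⟩) hjm
  rw [hs]
  calc m + 1 = (L.take (m+1)).countP (fun x => decide (x ≤ c)) := by
        rw [List.countP_eq_length.mpr (by intro a ha; simpa using htake a ha)]
        simp [List.length_take]; omega
    _ ≤ L.countP (fun x => decide (x ≤ c)) := by
        conv_rhs => rw [← List.take_append_drop (m+1) L]
        rw [List.countP_append]; omega
    _ = Multiset.countP (fun x => x ≤ c) (L : Multiset ℕ∞) := (Multiset.coe_countP _ _).symm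

def arcStep {V ι : Type*} (E : Finset ι) (tail head : ι → V) : V → V → Prop :=
  fun a b => ∃ e ∈ E, tail e = a ∧ head e = b

noncomputable def muCTP {V ι : Type*} [DecidableEq V] (E : Finset ι)
    (tail head : ι → V) (v : V) : ℕ :=
  (@Finset.filter _ (fun u => Relation.TransGen (arcStep E tail head) v u)
    (Classical.decPred _) (E.image head)).card

lemma muCTP_lt {V ι : Type*} [DecidableEq V] (E : Finset ι) (tail head : ι → V)
    (hacyc : ArcAcyclic E tail head) {v u : V} (h : arcStep E tail head v u) :
    muCTP E tail head u < muCTP E tail head v := by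
  classical
  apply Finset.card_lt_card
  rw [Finset.ssubset_def]
  constructor
  · intro w hw
    rw [Finset.mem_filter] at hw ⊢
    exact ⟨hw.1, Relation.TransGen.head h hw.2⟩
  · intro hcon
    have hu : u ∈ @Finset.filter _ (fun w => Relation.TransGen (arcStep E tail head) v w)
        (Classical.decPred _) (E.image head) := by
      rw [Finset.mem_filter]
      obtain ⟨e, he, hte, hhe⟩ := h
      exact ⟨Finset.mem_image.mpr ⟨e, he, hhe⟩, Relation.TransGen.single ⟨e, he, hte, hhe⟩⟩
    have := hcon hu
    rw [Finset.mem_filter] at this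
    exact hacyc u this.2

lemma ctp_main {V ι : Type*} [DecidableEq V] [DecidableEq ι]
    (E : Finset ι) (tail head : ι → V) (len : ι → ℕ) (t : V) (k T : ℕ)
    (π : ℕ → V → ℕ∞)
    (hacyc : ArcAcyclic E tail head)
    (hrec : SatisfiesRec E tail head len t π) :
    ∀ (n : ℕ) (v : V), muCTP E tail head v < n →
      ∀ (cost : ℕ) (vis : Finset V) (B : Finset ι),
        B.card ≤ k →
        (∀ f ∈ B, Relation.TransGen (arcStep E tail head) (tail f) v) →
        (cost : ℕ∞) + π (k - B.card) v ≤ (T : ℕ∞) →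
        DWin E tail head len t k T v cost vis B := by
  classical
  intro n
  induction n with
  | zero => intro v h; exact absurd h (Nat.not_lt_zero _)
  | succ n ih =>
    intro v hv cost vis B hBk hBinv hcost
    by_cases hvt : v = t
    · subst hvt
      refine DWin.reach _ _ _ ?_
      rw [hrec.1 (k - B.card), add_zero] at hcost
      exact_mod_cast hcost
    · set i := k - B.card with hi
      have hπtop : π i v ≠ ⊤ := by
        intro htop
        rw [htop, add_top, top_le_iff] at hcost
        exact ENat.coe_ne_top T hcost
      have hrecv := hrec.2 i v hvt
      -- some outgoing arc exists
      have h0 : kthSmallest (outVals E tail head len (π (i - 0)) v) 0 ≤ π i v := by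
        rw [hrecv]
        exact Finset.le_sup (f := fun m => kthSmallest (outVals E tail head len (π (i - m)) v) m)
          (Finset.mem_range.mpr (Nat.succ_pos i))
      rw [Nat.sub_zero] at h0
      have hFne : (E.filter (fun e => tail e = v)).Nonempty := by
        by_contra hno
        rw [Finset.not_nonempty_iff_eq_empty] at hno
        have : outVals E tail head len (π i) v = 0 := by rw [outVals, hno]; simp
        rw [this] at h0
        simp only [kthSmallest] at h0
        rw [Multiset.sort_zero] at h0
        exact hπtop (top_le_iff.mp (by simpa using h0))
      obtain ⟨e₀, he₀⟩ := hFne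
      -- key existence for valid B'
      have hkey : ∀ B' : Finset ι, B ⊆ B' → B'.card ≤ k →
          (∀ f ∈ B' \ B, f ∈ E ∧ tail f = v ∧ v ∉ vis) →
          ∃ e, e ∈ E ∧ tail e = v ∧ e ∉ B' ∧
            π (k - B'.card) (head e) + (len e : ℕ∞) ≤ π i v := by
        intro B' hsub hcard hnew
        have hBB' : B.card ≤ B'.card := Finset.card_le_card hsub
        set m := B'.card - B.card with hm
        have him : i - m = k - B'.card := by omega
        set s := outVals E tail head len (π (k - B'.card)) v with hsdef
        have hcle : kthSmallest s m ≤ π i v := by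
          rw [hrecv, hsdef]
          have h5 : kthSmallest (outVals E tail head len (π (i - m)) v) m ≤
              (Finset.range (i + 1)).sup
                fun m => kthSmallest (outVals E tail head len (π (i - m)) v) m :=
            Finset.le_sup (f := fun m => kthSmallest (outVals E tail head len (π (i - m)) v) m)
              (Finset.mem_range.mpr (by omega : m < i + 1))
          rwa [him] at h5
        have hctop : kthSmallest s m ≠ ⊤ := fun ht =>
          hπtop (top_le_iff.mp (ht ▸ hcle))
        have hcount := kth_count s m hctop
        set c := kthSmallest s m with hcdef
        set X := (E.filter (fun e => tail e = v)).filter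
          (fun e => π (k - B'.card) (head e) + (len e : ℕ∞) ≤ c) with hX
        have hXcard : m + 1 ≤ X.card := by
          have hcnt : s.countP (fun x => x ≤ c) = X.card := by
            rw [hsdef, outVals, Multiset.countP_map, hX]
            simp only [Finset.card_def, Finset.filter_val]
            rfl
          omega
        have hXB : (X ∩ B').card ≤ m := by
          have hss : X ∩ B' ⊆ B' \ B := by
            intro e he
            rw [Finset.mem_inter] at he
            rw [Finset.mem_sdiff]
            refine ⟨he.2, fun heB => ?_⟩
            have htv : tail e = v := (Finset.mem_filter.mp (Finset.mem_filter.mp he.1).1).2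
            exact hacyc v (htv ▸ hBinv e heB)
          calc (X ∩ B').card ≤ (B' \ B).card := Finset.card_le_card hss
            _ = m := by rw [Finset.card_sdiff_of_subset hsub]
        have hnotsub : ¬ X ⊆ B' := by
          intro hXsub
          have hcc : (X ∩ B').card = X.card := by
            rw [Finset.inter_eq_left.mpr hXsub]
          omega
        obtain ⟨e, heX, heB'⟩ := Finset.not_subset.mp hnotsub
        rw [hX, Finset.mem_filter, Finset.mem_filter] at heX
        exact ⟨e, heX.1.1, heX.1.2, heB', le_trans heX.2 hcle⟩
      refine DWin.move v cost vis B
        (fun B' => if h : ∃ e, e ∈ E ∧ tail e = v ∧ e ∉ B' ∧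
            π (k - B'.card) (head e) + (len e : ℕ∞) ≤ π i v
          then h.choose else e₀) ?_ ?_
      · intro B' h1 h2 h3
        have h := hkey B' h1 h2 h3
        simp only [dif_pos h]
        exact ⟨h.choose_spec.1, h.choose_spec.2.1, h.choose_spec.2.2.1⟩
      · intro B' h1 h2 h3
        have h := hkey B' h1 h2 h3
        simp only [dif_pos h]
        obtain ⟨heE, htv, heB', hle⟩ := h.choose_spec
        set e := h.choose with he
        have hstep : arcStep E tail head v (head e) := ⟨e, heE, htv, rfl⟩
        apply ih (head e) (by have := muCTP_lt E tail head hacyc hstep; omega)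
        · exact h2
        · intro f hf
          by_cases hfB : f ∈ B
          · exact Relation.TransGen.tail (hBinv f hfB) hstep
          · have := h3 f (Finset.mem_sdiff.mpr ⟨hf, hfB⟩)
            exact this.2.1 ▸ Relation.TransGen.single hstep
        · calc ((cost + len e : ℕ) : ℕ∞) + π (k - B'.card) (head e)
              = (cost : ℕ∞) + (π (k - B'.card) (head e) + (len e : ℕ∞)) := by
                push_cast; ring
            _ ≤ (cost : ℕ∞) + π i v := add_le_add_right hle _
            _ ≤ (T : ℕ∞) := hcost

/-- Soundness of the DAG Canadian Traveller dynamic program: if `π` satisfies the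
recursion on the weighted DAG and `π_k(s) ≤ T`, then Traveller has a strategy
guaranteeing arrival at `t` with total cost at most `T` against a Blocker of
budget `k`. -/
theorem dag_ctp_dp_sound {V ι : Type*} [DecidableEq V] [DecidableEq ι]
    (E : Finset ι) (tail head : ι → V) (len : ι → ℕ) (s t : V) (k T : ℕ)
    (π : ℕ → V → ℕ∞)
    (hacyc : ArcAcyclic E tail head)
    (hrec : SatisfiesRec E tail head len t π)
    (hval : π k s ≤ (T : ℕ∞)) :
    DWin E tail head len t k T s 0 ∅ ∅ := by
  apply ctp_main E tail head len t k T π hacyc hrec (muCTP E tail head s + 1) s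
    (Nat.lt_succ_self _)
  · exact Nat.zero_le k |>.trans_eq (by simp) |>.trans_eq' (by simp)
  · intro f hf; exact absurd hf (Finset.notMem_empty f)
  · simpa using hval
end

section
/- Completeness of the DAG Canadian Traveller dynamic program (the other direction of Lemma 2): in the Canadian Traveller game on a weighted DAG with source s, sink t, and Blocker budget k, if π_k(s) > T then Blocker has a strategy forcing Traveller either never to reach t or to incur total cost strictly greater than T. -/
/-- Blocker has a winning strategy in the Canadian Traveller game on a weighted
digraph with budgets `k` (blocked arcs) and `T` (Traveller's cost budget): there is
a safety invariant `Safe` on positions, containing the initial position, such that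
no safe position is a win for Traveller (`t` reached within cost `T`), and from
every safe position Blocker has a valid permanent declaration (new blocked arcs
leave the current, not yet visited, vertex; at most `k` blocked in total) after
which every arc Traveller may traverse leads to a safe position. -/
def DBlockerWins {V ι : Type*} [DecidableEq V] [DecidableEq ι]
    (E : Finset ι) (tail head : ι → V) (len : ι → ℕ) (s t : V) (k T : ℕ) :
    Prop :=
  ∃ Safe : V → ℕ → Finset V → Finset ι → Prop,
    Safe s 0 ∅ ∅ ∧
    ∀ v cost vis B, Safe v cost vis B →
      ¬ (v = t ∧ cost ≤ T) ∧
      ∃ B' : Finset ι, B ⊆ B' ∧ B'.card ≤ k ∧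
        (∀ f ∈ B' \ B, f ∈ E ∧ tail f = v ∧ v ∉ vis) ∧
        ∀ e ∈ E, tail e = v → e ∉ B' →
          Safe (head e) (cost + len e) (insert v vis) B'

/-- Selecting the `m` smallest arcs: there is a set `S` of at most `m` arcs of `A`
such that every arc of `A` outside `S` has value at least the `(m+1)`-th smallest
value. -/
lemma exists_block {ι : Type*} [DecidableEq ι] (A : Finset ι) (val : ι → ℕ∞) (m : ℕ) :
    ∃ S : Finset ι, S ⊆ A ∧ S.card ≤ m ∧
      ∀ e ∈ A, e ∉ S → kthSmallest (A.val.map val) m ≤ val e := by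
  classical
  set le : ι → ι → Bool := fun a b => decide (val a ≤ val b) with hle
  set l := A.toList.mergeSort le with hl
  have hperm : l.Perm A.toList := List.mergeSort_perm _ _
  have hsorted : List.Pairwise (fun a b => le a b = true) l :=
    List.pairwise_mergeSort
      (by intro a b c hab hbc
          simp only [hle, decide_eq_true_eq] at *
          exact le_trans hab hbc)
      (by intro a b; simp [hle, le_total]) _
  have hsortedv : List.Pairwise (· ≤ ·) (l.map val) := by
    refine List.Pairwise.map val ?_ hsorted
    intro a b hab
    simpa [hle] using hab
  have hkey : Multiset.sort ((A.val.map val)) (· ≤ ·) = l.map val := by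
    refine List.Perm.eq_of_pairwise' (Multiset.pairwise_sort _ _) hsortedv ?_
    rw [← Multiset.coe_eq_coe]
    rw [Multiset.sort_eq]
    have : (l.map val : Multiset ℕ∞) = ((A.toList.map val : List ℕ∞) : Multiset ℕ∞) := by
      rw [Multiset.coe_eq_coe]
      exact hperm.map val
    rw [this, ← Multiset.map_coe, Finset.coe_toList]
  refine ⟨(l.take m).toFinset, ?_, ?_, ?_⟩
  · intro x hx
    rw [List.mem_toFinset] at hx
    exact Finset.mem_toList.mp (hperm.mem_iff.mp (List.mem_of_mem_take hx))
  · calc (l.take m).toFinset.card ≤ (l.take m).length := List.toFinset_card_le _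
      _ ≤ m := by rw [List.length_take]; exact min_le_left _ _
  · intro e heA heS
    rw [List.mem_toFinset] at heS
    have hel : e ∈ l := hperm.mem_iff.mpr (Finset.mem_toList.mpr heA)
    have hed : e ∈ l.drop m := by
      have hel' : e ∈ l.take m ++ l.drop m := by rw [List.take_append_drop]; exact hel
      rcases List.mem_append.mp hel' with h | h
      · exact absurd h heS
      · exact h
    obtain ⟨j, hj, hje⟩ := List.mem_iff_getElem.mp hed
    rw [List.getElem_drop] at hje
    have hjl : m + j < l.length := by
      have := hj
      rw [List.length_drop] at this
      omega
    have hml : m < l.length := by omega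
    have hkth : kthSmallest (A.val.map val) m = val (l[m]'hml) := by
      unfold kthSmallest
      rw [hkey]
      rw [List.getD_eq_getElem _ _ (by rw [List.length_map]; exact hml)]
      simp
    rw [hkth, ← hje]
    rcases Nat.eq_zero_or_pos j with hj0 | hj0
    · subst hj0; simp
    · have := (List.pairwise_iff_getElem.mp hsorted) m (m + j) hml hjl (by omega)
      simpa [hle] using this

/-- Completeness of the DAG Canadian Traveller dynamic program: if `π` satisfies the
recursion on the weighted DAG and `π_k(s) > T`, then Blocker has a strategy forcing
Traveller either never to reach `t` or to incur total cost strictly greater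
than `T`. -/
theorem dag_ctp_dp_complete {V ι : Type*} [DecidableEq V] [DecidableEq ι]
    (E : Finset ι) (tail head : ι → V) (len : ι → ℕ) (s t : V) (k T : ℕ)
    (π : ℕ → V → ℕ∞)
    (hacyc : ArcAcyclic E tail head)
    (hrec : SatisfiesRec E tail head len t π)
    (hval : (T : ℕ∞) < π k s) :
    DBlockerWins E tail head len s t k T := by
  classical
  obtain ⟨hπt, hπrec⟩ := hrec
  set R : V → V → Prop := fun a b => ∃ e ∈ E, tail e = a ∧ head e = b with hR
  refine ⟨fun v cost vis B => B.card ≤ k ∧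
      ((T : ℕ∞) < (cost : ℕ) ∨
        ((∀ u, Relation.ReflTransGen R v u → u ∉ vis) ∧
         (∀ f ∈ B, tail f ∈ vis) ∧
         ∃ i, i + B.card ≤ k ∧ (T : ℕ∞) < (cost : ℕ) + π i v)), ?_, ?_⟩
  · exact ⟨by simp, Or.inr ⟨by simp, by simp, k, by simp, by simpa using hval⟩⟩
  · rintro v cost vis B ⟨hBk, hcost | ⟨hP1, hP2, i, hik, hπv⟩⟩
    · -- already over budget: block nothing
      refine ⟨?_, B, subset_rfl, hBk, by simp, ?_⟩
      · rintro ⟨rfl, hle⟩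
        exact absurd hcost (by exact_mod_cast not_lt.mpr hle)
      · intro e _ _ _
        refine ⟨hBk, Or.inl ?_⟩
        exact lt_of_lt_of_le hcost (by exact_mod_cast Nat.le_add_right _ _)
    · have hvvis : v ∉ vis := hP1 v Relation.ReflTransGen.refl
      by_cases hvt : v = t
      · -- at the sink: cost already exceeds T
        subst hvt
        have hcost : (T : ℕ∞) < (cost : ℕ) := by simpa [hπt i] using hπv
        refine ⟨?_, B, subset_rfl, hBk, by simp, ?_⟩
        · rintro ⟨-, hle⟩
          exact absurd hcost (by exact_mod_cast not_lt.mpr hle)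
        · intro e _ _ _
          refine ⟨hBk, Or.inl ?_⟩
          exact lt_of_lt_of_le hcost (by exact_mod_cast Nat.le_add_right _ _)
      · -- main case
        have hsup := hπrec i v hvt
        obtain ⟨m, hmmem, hm⟩ := Finset.exists_mem_eq_sup (Finset.range (i + 1))
          ⟨0, Finset.mem_range.mpr (Nat.succ_pos _)⟩
          (fun m => kthSmallest (outVals E tail head len (π (i - m)) v) m)
        have hmi : m ≤ i := Nat.lt_succ_iff.mp (Finset.mem_range.mp hmmem)
        set A := E.filter fun e => tail e = v with hA
        set val : ι → ℕ∞ := fun e => π (i - m) (head e) + (len e : ℕ∞) with hvalv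
        obtain ⟨S, hSA, hScard, hSmin⟩ := exists_block A val m
        have houtv : outVals E tail head len (π (i - m)) v = A.val.map val := rfl
        have hπeq : π i v = kthSmallest (A.val.map val) m := by
          rw [hsup, hm, houtv]
        have hdisj : Disjoint B S := by
          rw [Finset.disjoint_left]
          intro f hfB hfS
          have := hP2 f hfB
          have htf : tail f = v := (Finset.mem_filter.mp (hSA hfS)).2
          exact hvvis (htf ▸ this)
        have hB'card : (B ∪ S).card ≤ k := by
          calc (B ∪ S).card ≤ B.card + S.card := Finset.card_union_le _ _
            _ ≤ B.card + m := by omega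
            _ ≤ B.card + i := by omega
            _ ≤ k := by omega
        refine ⟨?_, B ∪ S, Finset.subset_union_left, hB'card, ?_, ?_⟩
        · rintro ⟨rfl, -⟩; exact hvt rfl
        · intro f hf
          rw [Finset.mem_sdiff] at hf
          have hfS : f ∈ S := by
            rcases Finset.mem_union.mp hf.1 with h | h
            · exact absurd h hf.2
            · exact h
          have := Finset.mem_filter.mp (hSA hfS)
          exact ⟨this.1, this.2, hvvis⟩
        · intro e heE hetail heB'
          have heA : e ∈ A := Finset.mem_filter.mpr ⟨heE, hetail⟩
          have heS : e ∉ S := fun h => heB' (Finset.mem_union_right _ h)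
          have hkle : π i v ≤ val e := hπeq ▸ hSmin e heA heS
          have hRve : R v (head e) := ⟨e, heE, hetail, rfl⟩
          refine ⟨hB'card, Or.inr ⟨?_, ?_, i - m, ?_, ?_⟩⟩
          · intro u hu hu'
            rw [Finset.mem_insert] at hu'
            rcases hu' with rfl | hu'
            · exact hacyc u (Relation.TransGen.head' hRve hu)
            · exact hP1 u (Relation.ReflTransGen.head hRve hu) hu'
          · intro f hf
            rcases Finset.mem_union.mp hf with h | h
            · exact Finset.mem_insert_of_mem (hP2 f h)
            · exact Finset.mem_insert.mpr (Or.inl (Finset.mem_filter.mp (hSA h)).2)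
          · have : (B ∪ S).card ≤ B.card + m := by
              calc (B ∪ S).card ≤ B.card + S.card := Finset.card_union_le _ _
                _ ≤ B.card + m := by omega
            omega
          · push_cast
            calc (T : ℕ∞) < (cost : ℕ) + π i v := hπv
              _ ≤ (cost : ℕ) + val e := by gcongr
              _ = (cost : ℕ∞) + (len e : ℕ∞) + π (i - m) (head e) := by
                  rw [hvalv]; ring
end
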